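/- Let β > 1, K > 0, T > 0 and g_T(s) = K ∫₀^s (log(T/u))^{2/β} du. Then for all 0 < s < T: ∫₀^s (1/β)(g_T'(u))^β du − (s^{1−β}/β)(g_T(s))^β < (4 K^β s)/β. -/

import Mathlib

open MeasureTheory intervalIntegral

section helpers
open Real Set Filter Topology

lemma bern_low {a : ℝ} (ha : 0 < a) (ha2 : a ≤ 1) {y : ℝ} (hy : 0 ≤ y) :
    1 + a*y - a*(1-a)/2*y^2 ≤ (1+y)^a := by
  set b := 1 - a with hb
  have hb0 : 0 ≤ b := by simp [hb]; linarith
  have hb1 : b ≤ 1 := by simp [hb]; linarith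
  set g : ℝ → ℝ := fun x => (1+x)^a - (1 + a*x - a*(1-a)/2*x^2) with hg
  have key : ∀ x ∈ Set.Ioi (0:ℝ), HasDerivAt g (a*(1+x)^(a-1) - a + a*(1-a)*x) x := by
    intro x hx
    have hx0 : (0:ℝ) < x := hx
    have h1 : HasDerivAt (fun x : ℝ => (1+x)^a) (a*(1+x)^(a-1)) x := by
      have := (Real.hasDerivAt_rpow_const (x := 1+x) (p := a) (Or.inl (by linarith))).comp x
        ((hasDerivAt_id x).const_add 1)
      simpa [Function.comp_def] using this
    have h2 : HasDerivAt (fun x : ℝ => 1 + a*x - a*(1-a)/2*x^2) (a - a*(1-a)*x) x := by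
      have : HasDerivAt (fun x : ℝ => 1 + a*x - a*(1-a)/2*x^2)
          (a*1 - a*(1-a)/2*(2*x)) x := by
        exact (((hasDerivAt_id x).const_mul a).const_add 1).sub
          (((hasDerivAt_pow 2 x).const_mul (a*(1-a)/2)).congr_deriv (by ring))
      convert this using 1; ring
    exact (h1.sub h2).congr_deriv (by ring)
  have derivnn : ∀ x ∈ Set.Ioi (0:ℝ), 0 ≤ a*(1+x)^(a-1) - a + a*(1-a)*x := by
    intro x hx
    have hx0 : (0:ℝ) < x := hx
    have h1x : (0:ℝ) < 1 + x := by linarith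
    have hber : (1+x)^b ≤ 1 + b*x :=
      rpow_one_add_le_one_add_mul_self (by linarith) hb0 hb1
    have hpos : (0:ℝ) < (1+x)^b := rpow_pos_of_pos h1x b
    have hinv : 1 - b*x ≤ ((1+x)^b)⁻¹ := by
      rcases le_or_gt (1 - b*x) 0 with h | h
      · exact h.trans (le_of_lt (inv_pos.2 hpos))
      · rw [inv_eq_one_div, le_div_iff₀ hpos]
        nlinarith [mul_le_mul_of_nonneg_left hber h.le, sq_nonneg (b*x)]
    have heq : (1+x)^(a-1) = ((1+x)^b)⁻¹ := by
      rw [show a - 1 = -b by rw [hb]; ring, Real.rpow_neg h1x.le]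
    have h3 : 1 - b*x ≤ (1+x)^(a-1) := by rw [heq]; exact hinv
    have h4 : a*(1 - b*x) ≤ a*(1+x)^(a-1) := mul_le_mul_of_nonneg_left h3 ha.le
    have hbeq : (1:ℝ) - a = b := hb.symm
    nlinarith
  have cont : ContinuousOn g (Set.Ici (0:ℝ)) := by
    apply ContinuousOn.sub
    · exact (continuous_const.add continuous_id).continuousOn.rpow_const
        (fun x hx => Or.inl (by have : (0:ℝ) ≤ x := hx; show (1:ℝ) + x ≠ 0; positivity))
    · fun_prop
  have mono : MonotoneOn g (Set.Ici (0:ℝ)) := by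
    apply monotoneOn_of_deriv_nonneg (convex_Ici 0) cont
    · intro x hx
      rw [interior_Ici] at hx
      exact (key x hx).differentiableAt.differentiableWithinAt
    · intro x hx
      rw [interior_Ici] at hx
      rw [(key x hx).deriv]
      exact derivnn x hx
  have h0 : g 0 = 0 := by simp [hg]
  have := mono (Set.self_mem_Ici) (Set.mem_Ici.2 hy) hy
  rw [h0] at this
  simp only [hg] at this
  linarith

lemma taylor_low {a : ℝ} (ha : 0 < a) (ha2 : a ≤ 2) {L x : ℝ} (hL : 0 < L) (hx : L ≤ x) :
    L^a + a*L^(a-1)*(x-L) - a*|a-1|/2*L^(a-2)*(x-L)^2 ≤ x^a := by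
  set y : ℝ := (x - L)/L with hy
  have hy0 : 0 ≤ y := div_nonneg (by linarith) hL.le
  have hxy : x = L * (1 + y) := by rw [hy]; field_simp; ring
  have hA : (0:ℝ) < L^a := rpow_pos_of_pos hL a
  have hE1 : L^(a-1)*(x-L) = L^a * y := by
    rw [Real.rpow_sub hL, Real.rpow_one, hy]; field_simp
  have hE2 : L^(a-2)*(x-L)^2 = L^a * y^2 := by
    rw [Real.rpow_sub hL, hy, Real.rpow_two]; field_simp
  have hxa : x^a = L^a * (1+y)^a := by
    rw [hxy, Real.mul_rpow hL.le (by linarith)]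
  rcases le_total 1 a with h1 | h1
  · have habs : |a-1| = a-1 := abs_of_nonneg (by linarith)
    have hb : 1 + a*y ≤ (1+y)^a := one_add_mul_self_le_rpow_one_add (by linarith) h1
    rw [habs, hxa, mul_assoc a, hE1, mul_assoc (a*(a-1)/2), hE2]
    nlinarith [mul_le_mul_of_nonneg_left hb hA.le, mul_nonneg hA.le (sq_nonneg y),
      mul_nonneg (mul_nonneg (mul_nonneg ha.le (by linarith : (0:ℝ) ≤ a - 1)) hA.le) (sq_nonneg y)]
  · have habs : |a-1| = 1-a := by rw [abs_of_nonpos (by linarith)]; ring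
    have hb : 1 + a*y - a*(1-a)/2*y^2 ≤ (1+y)^a := bern_low ha h1 hy0
    rw [habs, hxa, mul_assoc a, hE1, mul_assoc (a*(1-a)/2), hE2]
    nlinarith [mul_le_mul_of_nonneg_left hb hA.le]

-- integrability of (log(c/u))^2 on (0,s]
lemma logsq_integrable {c s : ℝ} (hc : 0 < c) (hs : 0 < s) (hsc : s ≤ c) :
    IntegrableOn (fun u => (Real.log (c/u))^2) (Ioc 0 s) := by
  have hg : IntegrableOn (fun u : ℝ => 16 * (c^((1:ℝ)/2) * u^(-(1:ℝ)/2))) (Ioc 0 s) := by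
    have h0 : IntervalIntegrable (fun u : ℝ => u^(-(1:ℝ)/2)) volume 0 s :=
      intervalIntegral.intervalIntegrable_rpow' (by norm_num)
    rw [intervalIntegrable_iff_integrableOn_Ioc_of_le hs.le] at h0
    simpa [mul_assoc, IntegrableOn] using (h0.const_mul (16 * c^((1:ℝ)/2)))
  apply Integrable.mono' hg
  · exact ((Real.measurable_log.comp (measurable_const.div measurable_id)).pow_const 2)
      |>.aestronglyMeasurable
  · filter_upwards [ae_restrict_mem measurableSet_Ioc] with u hu
    have hu0 : 0 < u := hu.1
    have hcu : (0:ℝ) ≤ c/u := by positivity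
    have hlog0 : 0 ≤ Real.log (c/u) := Real.log_nonneg (by
      rw [le_div_iff₀ hu0]; simpa using hu.2.trans hsc)
    have hlog : Real.log (c/u) ≤ 4 * (c/u)^((1:ℝ)/4) := by
      have := Real.log_le_rpow_div hcu (by norm_num : (0:ℝ) < 1/4)
      calc Real.log (c/u) ≤ (c/u)^((1:ℝ)/4) / (1/4) := this
        _ = 4 * (c/u)^((1:ℝ)/4) := by ring
    have hsq : (Real.log (c/u))^2 ≤ 16 * ((c/u)^((1:ℝ)/4))^2 := by
      nlinarith [Real.rpow_nonneg hcu ((1:ℝ)/4)]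
    have h14 : ((c/u)^((1:ℝ)/4))^2 = (c/u)^((1:ℝ)/2) := by
      rw [← Real.rpow_natCast ((c/u)^((1:ℝ)/4)) 2, ← Real.rpow_mul hcu]
      norm_num
    have h12 : (c/u)^((1:ℝ)/2) = c^((1:ℝ)/2) * u^(-(1:ℝ)/2) := by
      rw [Real.div_rpow hc.le hu0.le, show -(1:ℝ)/2 = -(1/2) by ring, Real.rpow_neg hu0.le, div_eq_mul_inv]
    rw [Real.norm_eq_abs, abs_of_nonneg (sq_nonneg _)]
    rw [h14, h12] at hsq
    linarith

lemma log_integrable {c s : ℝ} (hc : 0 < c) (hs : 0 < s) (hsc : s ≤ c) :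
    IntegrableOn (fun u => Real.log (c/u)) (Ioc 0 s) := by
  apply Integrable.mono' ((integrable_const 1).add (logsq_integrable hc hs hsc))
  · exact (Real.measurable_log.comp (measurable_const.div measurable_id)).aestronglyMeasurable
  · filter_upwards [ae_restrict_mem measurableSet_Ioc] with u hu
    have hu0 : 0 < u := hu.1
    have hlog0 : 0 ≤ Real.log (c/u) := Real.log_nonneg (by
      rw [le_div_iff₀ hu0]; simpa using hu.2.trans hsc)
    rw [Real.norm_eq_abs, abs_of_nonneg hlog0]
    simp only [Pi.add_apply]
    nlinarith

lemma logpow_integrable {c s p : ℝ} (hc : 0 < c) (hs : 0 < s) (hsc : s ≤ c)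
    (hp : 0 < p) (hp2 : p ≤ 2) :
    IntegrableOn (fun u => (Real.log (c/u))^p) (Ioc 0 s) := by
  apply Integrable.mono' ((integrable_const 1).add (logsq_integrable hc hs hsc))
  · exact ((Real.measurable_log.comp (measurable_const.div measurable_id)).pow_const p)
      |>.aestronglyMeasurable
  · filter_upwards [ae_restrict_mem measurableSet_Ioc] with u hu
    have hu0 : 0 < u := hu.1
    have hlog0 : 0 ≤ Real.log (c/u) := Real.log_nonneg (by
      rw [le_div_iff₀ hu0]; simpa using hu.2.trans hsc)
    rw [Real.norm_eq_abs, abs_of_nonneg (Real.rpow_nonneg hlog0 p)]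
    simp only [Pi.add_apply]
    rcases le_total (Real.log (c/u)) 1 with h | h
    · have : (Real.log (c/u))^p ≤ 1 := Real.rpow_le_one hlog0 h hp.le
      nlinarith [sq_nonneg (Real.log (c/u))]
    · have h1 : (Real.log (c/u))^p ≤ (Real.log (c/u))^(2:ℝ) :=
        Real.rpow_le_rpow_of_exponent_le h hp2
      rw [Real.rpow_two] at h1
      nlinarith

lemma int_log1 {c s : ℝ} (hc : 0 < c) (hs : 0 < s) (hsc : s ≤ c) :
    ∫ u in (0:ℝ)..s, Real.log (c/u) = s * (Real.log (c/s) + 1) := by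
  set F : ℝ → ℝ := fun u => u * (Real.log c - Real.log u) + u with hF
  have hderiv : ∀ u ∈ Ioo (0:ℝ) s, HasDerivAt F (Real.log (c/u)) u := by
    intro u hu
    have hu0 : 0 < u := hu.1
    have hlog : HasDerivAt Real.log u⁻¹ u := Real.hasDerivAt_log hu0.ne'
    have h1 : HasDerivAt (fun u : ℝ => Real.log c - Real.log u) (-u⁻¹) u := hlog.const_sub _
    have h2 : HasDerivAt (fun u : ℝ => u * (Real.log c - Real.log u))
        (1 * (Real.log c - Real.log u) + u * -u⁻¹) u := (hasDerivAt_id u).mul h1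
    have h3 := (h2.add (hasDerivAt_id u))
    rw [Real.log_div hc.ne' hu0.ne']
    apply h3.congr_deriv
    field_simp
    ring
  have hcont : ContinuousOn F (Icc 0 s) := by
    have : Continuous F := by
      have h := continuous_mul_log
      have : F = fun u => u * Real.log c - u * Real.log u + u := by
        funext u; simp [hF]; ring
      rw [this]
      exact ((continuous_id.mul continuous_const).sub continuous_mul_log).add continuous_id
    exact this.continuousOn
  have hint : IntervalIntegrable (fun u => Real.log (c/u)) volume 0 s := by
    rw [intervalIntegrable_iff_integrableOn_Ioc_of_le hs.le]
    exact log_integrable hc hs hsc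
  rw [integral_eq_sub_of_hasDerivAt_of_le hs.le hcont hderiv hint]
  simp only [hF, Real.log_zero, Real.log_div hc.ne' hs.ne']
  ring

lemma int_logsq {c s : ℝ} (hc : 0 < c) (hs : 0 < s) (hsc : s ≤ c) :
    ∫ u in (0:ℝ)..s, (Real.log (c/u))^2
      = s * ((Real.log (c/s))^2 + 2*Real.log (c/s) + 2) := by
  set F : ℝ → ℝ := fun u => u * (Real.log c - Real.log u)^2
    + 2*(u * (Real.log c - Real.log u)) + 2*u with hF
  have hderiv : ∀ u ∈ Ioo (0:ℝ) s, HasDerivAt F ((Real.log (c/u))^2) u := by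
    intro u hu
    have hu0 : 0 < u := hu.1
    have hlog : HasDerivAt Real.log u⁻¹ u := Real.hasDerivAt_log hu0.ne'
    have h1 : HasDerivAt (fun u : ℝ => Real.log c - Real.log u) (-u⁻¹) u := hlog.const_sub _
    have h2 : HasDerivAt (fun u : ℝ => (Real.log c - Real.log u)^2)
        ((2:ℕ) * (Real.log c - Real.log u)^(2-1) * -u⁻¹) u := h1.pow 2
    have h3 : HasDerivAt (fun u : ℝ => u * (Real.log c - Real.log u)^2)
        (1 * (Real.log c - Real.log u)^2
          + u * ((2:ℕ) * (Real.log c - Real.log u)^(2-1) * -u⁻¹)) u :=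
      (hasDerivAt_id u).mul h2
    have h4 : HasDerivAt (fun u : ℝ => u * (Real.log c - Real.log u))
        (1 * (Real.log c - Real.log u) + u * -u⁻¹) u := (hasDerivAt_id u).mul h1
    have h5 := (h3.add (h4.const_mul 2)).add ((hasDerivAt_id u).const_mul 2)
    rw [Real.log_div hc.ne' hu0.ne']
    apply h5.congr_deriv
    have : u * u⁻¹ = 1 := mul_inv_cancel₀ hu0.ne'
    field_simp
    ring
  have hcont : ContinuousOn F (Icc 0 s) := by
    intro x hx
    rcases eq_or_lt_of_le hx.1 with h0 | h0
    · -- x = 0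
      subst h0
      apply ContinuousWithinAt.mono _ (Icc_subset_Ici_self)
      rw [← continuousWithinAt_Ioi_iff_Ici]
      have hFeq : ∀ u : ℝ, F u = ((Real.log c)^2 + 2*Real.log c + 2) * u
          + (-(2*Real.log c) - 2) * (u * Real.log u) + u * (Real.log u)^2 := by
        intro u; simp only [hF]; ring
      have T2 : Tendsto (fun u : ℝ => u * Real.log u) (𝓝[>] 0) (𝓝 0) := by
        have := (continuous_mul_log.tendsto 0).mono_left (nhdsWithin_le_nhds (s := Ioi (0:ℝ)))
        simpa using this
      have T1 : Tendsto (fun u : ℝ => u * (Real.log u)^2) (𝓝[>] 0) (𝓝 0) := by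
        have Th := tendsto_log_mul_rpow_nhdsGT_zero (r := 1/2) (by norm_num)
        have := Th.mul Th
        rw [mul_zero] at this
        apply this.congr'
        filter_upwards [self_mem_nhdsWithin] with u (hu : 0 < u)
        have : u^((1:ℝ)/2) * u^((1:ℝ)/2) = u := by
          rw [← Real.rpow_add hu]; norm_num
        calc Real.log u * u^((1:ℝ)/2) * (Real.log u * u^((1:ℝ)/2))
            = (Real.log u)^2 * (u^((1:ℝ)/2) * u^((1:ℝ)/2)) := by ring
          _ = u * (Real.log u)^2 := by rw [this]; ring
      have Tid : Tendsto (fun u : ℝ => u) (𝓝[>] (0:ℝ)) (𝓝 0) :=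
        (continuous_id.tendsto 0).mono_left nhdsWithin_le_nhds
      have Tall : Tendsto F (𝓝[>] (0:ℝ)) (𝓝 0) := by
        have := ((Tid.const_mul ((Real.log c)^2 + 2*Real.log c + 2)).add
          (T2.const_mul (-(2*Real.log c) - 2))).add T1
        simp only [mul_zero, add_zero, zero_add] at this
        apply this.congr'
        filter_upwards with u
        rw [hFeq u]
      have hF0 : F 0 = 0 := by simp [hF]
      unfold ContinuousWithinAt
      rw [hF0]
      exact Tall
    · -- 0 < x
      apply ContinuousAt.continuousWithinAt
      have hlog : ContinuousAt Real.log x := Real.continuousAt_log h0.ne'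
      have h1 : ContinuousAt (fun u : ℝ => Real.log c - Real.log u) x :=
        continuousAt_const.sub hlog
      exact ((continuousAt_id.mul (h1.pow 2)).add
        ((continuousAt_id.mul h1).const_mul 2)).add (continuousAt_id.const_mul 2)
  have hint : IntervalIntegrable (fun u => (Real.log (c/u))^2) volume 0 s := by
    rw [intervalIntegrable_iff_integrableOn_Ioc_of_le hs.le]
    exact logsq_integrable hc hs hsc
  rw [integral_eq_sub_of_hasDerivAt_of_le hs.le hcont hderiv hint]
  simp only [hF, Real.log_zero, Real.log_div hc.ne' hs.ne']
  ring
set_option maxHeartbeats 1000000 in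
/-- Inequality (3.4): the action of the trajectory traced by `g_T` exceeds the
straight-line (Jensen) lower bound by at most `4K^β s/β`. -/
theorem stmt_9 (β K T : ℝ) (hβ : 1 < β) (hK : 0 < K) (hT : 0 < T)
    (s : ℝ) (hs : 0 < s) (hsT : s < T) :
    (∫ u in (0 : ℝ)..s, (1 / β) * (K * Real.log (T / u) ^ ((2 : ℝ) / β)) ^ β) -
      (s ^ (1 - β) / β) * (K * ∫ u in (0 : ℝ)..s, Real.log (T / u) ^ ((2 : ℝ) / β)) ^ β <
      4 * K ^ β * s / β := by
  have hβ0 : (0:ℝ) < β := by linarith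
  set a : ℝ := 2/β with ha_def
  have ha : 0 < a := by positivity
  have ha2 : a ≤ 2 := by
    rw [ha_def, div_le_iff₀ hβ0]; nlinarith
  have haβ : a * β = 2 := by rw [ha_def]; field_simp
  set L : ℝ := Real.log (T/s) with hL_def
  have hL : 0 < L := Real.log_pos (by rw [lt_div_iff₀ hs]; linarith)
  set c0 : ℝ := a * |a - 1| with hc0_def
  have hc00 : 0 ≤ c0 := mul_nonneg ha.le (abs_nonneg _)
  have hβc0 : β * c0 = 2 * |a-1| := by
    rw [hc0_def, ← mul_assoc, mul_comm β a, haβ]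
  have habs1 : |a - 1| < 1 := by
    rw [abs_lt]; constructor <;> [linarith; nlinarith [ha_def ▸ (by rw [div_lt_iff₀ hβ0]; nlinarith : 2/β < 2)]]
  set Iv : ℝ := ∫ u in (0:ℝ)..s, Real.log (T/u) ^ a with hIv_def
  -- pointwise facts on Ioc
  have hlb : ∀ u ∈ Ioc (0:ℝ) s, L ≤ Real.log (T/u) := by
    intro u hu
    exact Real.log_le_log (by positivity) (div_le_div_of_nonneg_left hT.le hu.1 hu.2)
  -- interval integrabilities
  have hint_pow : IntervalIntegrable (fun u => Real.log (T/u) ^ a) volume 0 s := by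
    rw [intervalIntegrable_iff_integrableOn_Ioc_of_le hs.le]
    exact logpow_integrable hT hs hsT.le ha ha2
  have hint_log_s : IntervalIntegrable (fun u => Real.log (s/u)) volume 0 s := by
    rw [intervalIntegrable_iff_integrableOn_Ioc_of_le hs.le]
    exact log_integrable hs hs le_rfl
  have hint_logsq_s : IntervalIntegrable (fun u => (Real.log (s/u))^2) volume 0 s := by
    rw [intervalIntegrable_iff_integrableOn_Ioc_of_le hs.le]
    exact logsq_integrable hs hs le_rfl
  have hrestr : volume.restrict (Icc (0:ℝ) s) = volume.restrict (Ioc (0:ℝ) s) :=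
    (Measure.restrict_congr_set Ioc_ae_eq_Icc).symm
  -- lower bound Iv ≥ s * L^a
  have hIvc : s * L^a ≤ Iv := by
    have h := intervalIntegral.integral_mono_ae_restrict (μ := volume) hs.le
      (_root_.intervalIntegrable_const (c := L^a)) hint_pow ?_
    · simpa using h
    · rw [hrestr]
      filter_upwards [ae_restrict_mem measurableSet_Ioc] with u hu
      exact Real.rpow_le_rpow hL.le (hlb u hu) ha.le
  have hIvpos : 0 < Iv := lt_of_lt_of_le (by positivity) hIvc
  -- main lower bound on Iv
  set P : ℝ := L^a + a*L^(a-1) - c0*L^(a-2) with hP_def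
  have hIvP : s * P ≤ Iv := by
    have key : ∀ u ∈ Ioc (0:ℝ) s,
        L^a + a*L^(a-1)*Real.log (s/u) - c0/2*L^(a-2)*(Real.log (s/u))^2
          ≤ Real.log (T/u) ^ a := by
      intro u hu
      have hu0 : 0 < u := hu.1
      have hdd : Real.log (T/u) - L = Real.log (s/u) := by
        rw [hL_def, Real.log_div hT.ne' hu0.ne', Real.log_div hT.ne' hs.ne',
          Real.log_div hs.ne' hu0.ne']
        ring
      have := taylor_low ha ha2 hL (hlb u hu)
      rw [hdd] at this
      calc L^a + a*L^(a-1)*Real.log (s/u) - c0/2*L^(a-2)*(Real.log (s/u))^2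
          = L^a + a*L^(a-1)*Real.log (s/u) - a*|a-1|/2*L^(a-2)*(Real.log (s/u))^2 := by
            rw [hc0_def]
        _ ≤ Real.log (T/u) ^ a := this
    have hGint : IntervalIntegrable (fun u =>
        L^a + a*L^(a-1)*Real.log (s/u) - c0/2*L^(a-2)*(Real.log (s/u))^2) volume 0 s := by
      exact (_root_.intervalIntegrable_const.add ((hint_log_s.const_mul _))).sub
        ((hint_logsq_s.const_mul _))
    have h := intervalIntegral.integral_mono_ae_restrict (μ := volume) hs.le hGint hint_pow ?_
    · have hval : (∫ u in (0:ℝ)..s,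
          (L^a + a*L^(a-1)*Real.log (s/u) - c0/2*L^(a-2)*(Real.log (s/u))^2)) = s * P := by
        rw [intervalIntegral.integral_sub (_root_.intervalIntegrable_const.add
            ((hint_log_s.const_mul _))) ((hint_logsq_s.const_mul _)),
          intervalIntegral.integral_add intervalIntegrable_const ((hint_log_s.const_mul _)),
          intervalIntegral.integral_const,
          intervalIntegral.integral_const_mul, intervalIntegral.integral_const_mul,
          int_log1 hs hs le_rfl, int_logsq hs hs le_rfl]
        simp only [div_self hs.ne', Real.log_one, smul_eq_mul]
        rw [hP_def]; ring
      rw [hval] at h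
      exact h
    · rw [hrestr]
      filter_upwards [ae_restrict_mem measurableSet_Ioc] with u hu
      exact key u hu
  -- rewrite the action integral
  have E1 : (∫ u in (0 : ℝ)..s, (1 / β) * (K * Real.log (T / u) ^ a) ^ β)
      = (K^β/β) * (s * (L^2 + 2*L + 2)) := by
    have : (∫ u in (0 : ℝ)..s, (1 / β) * (K * Real.log (T / u) ^ a) ^ β)
        = ∫ u in (0 : ℝ)..s, (K^β/β) * (Real.log (T/u))^2 := by
      apply intervalIntegral.integral_congr_ae
      rw [Set.uIoc_of_le hs.le]
      filter_upwards with u hu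
      have h0 : 0 ≤ Real.log (T/u) := le_trans hL.le (hlb u hu)
      rw [Real.mul_rpow hK.le (Real.rpow_nonneg h0 a), ← Real.rpow_mul h0, haβ,
        Real.rpow_two]
      ring
    rw [this, intervalIntegral.integral_const_mul, int_logsq hT hs hsT.le]
  rw [E1]
  have hfinal : s * (L^2 + 2*L - 2) < s^(1-β) * Iv^β := by
    set Q : ℝ := L^2 + 2*L - β*c0 with hQ_def
    have hstep1 : s * (L^2+2*L-2) < s*Q := by
      apply mul_lt_mul_of_pos_left _ hs
      rw [hQ_def]; nlinarith
    have hstep2 : s * Q ≤ s^(1-β) * Iv^β := by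
      rcases le_or_gt Q 0 with hQ0 | hQ0
      · have hpos : 0 < s^(1-β)*Iv^β := by positivity
        nlinarith [mul_nonpos_of_nonneg_of_nonpos hs.le hQ0]
      · have hnum : 0 < L^2 + a*L - c0 := by nlinarith [sq_nonneg L]
        set z : ℝ := a/L - c0/L^2 with hz_def
        have h1z : 1 + z = (L^2 + a*L - c0)/L^2 := by rw [hz_def]; field_simp; ring
        have h1zpos : 0 < 1 + z := by rw [h1z]; positivity
        have hzL : z*L^2 = a*L - c0 := by rw [hz_def]; field_simp
        have hPz : P = L^a * (1+z) := by
          rw [hP_def, h1z, Real.rpow_sub hL, Real.rpow_sub hL, Real.rpow_one, Real.rpow_two]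
          field_simp
        have hPpos : 0 < P := by
          rw [hPz]; positivity
        have hIvβ : (s*P)^β ≤ Iv^β := Real.rpow_le_rpow (by positivity) hIvP hβ0.le
        have hsplit : (s*P)^β = s^β * P^β := Real.mul_rpow hs.le hPpos.le
        have hPβ : Q ≤ P^β := by
          have hbern : 1 + β*z ≤ (1+z)^β :=
            one_add_mul_self_le_rpow_one_add (by linarith) hβ.le
          have hPeq : P^β = L^2 * (1+z)^β := by
            rw [hPz, Real.mul_rpow (Real.rpow_nonneg hL.le a) h1zpos.le,
              ← Real.rpow_mul hL.le, haβ, Real.rpow_two]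
          have hQeq : L^2*(1+β*z) = Q := by
            rw [hQ_def]; linear_combination β * hzL + L * haβ
          rw [hPeq, ← hQeq]
          exact mul_le_mul_of_nonneg_left hbern (sq_nonneg L)
        have hss : s^(1-β)*s^β = s := by
          rw [← Real.rpow_add hs]; norm_num
        calc s*Q ≤ s*P^β := mul_le_mul_of_nonneg_left hPβ hs.le
          _ = s^(1-β)*(s^β*P^β) := by rw [← mul_assoc, hss]
          _ = s^(1-β)*(s*P)^β := by rw [hsplit]
          _ ≤ s^(1-β)*Iv^β := by
              apply mul_le_mul_of_nonneg_left hIvβ (Real.rpow_nonneg hs.le _)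
    linarith
  have hKb : 0 < K^β := Real.rpow_pos_of_pos hK β
  rw [Real.mul_rpow hK.le hIvpos.le]
  have e : s^(1-β)/β*(K^β*Iv^β) = K^β/β*(s^(1-β)*Iv^β) := by ring
  rw [e]
  have h2 := mul_lt_mul_of_pos_left hfinal (div_pos hKb hβ0)
  have h4 : K^β/β*(s*(L^2+2*L+2)) - K^β/β*(s*(L^2+2*L-2)) = 4*K^β*s/β := by ring
  linarith

end helpers
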